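/- Define B_1 = 1 and B_n = Σ_{α=1}^{n−1} C(n−1, α−1) · C(n−1, α) · B_α · B_{n−α} for n ≥ 2 (the number of decreasing maximal chains of Π_{n,2}). Define b_0 = 1 and b_{n+1} = Σ_{i+j=n} C(n+1, i) · C(n+1, j) · b_i · b_j for n ≥ 0 (the number of complete non-ambiguous trees with n internal vertices). Then B_n = b_{n−1} for all n ≥ 1. -/

import Mathlib

/-- the sequence `B` counting decreasing maximal chains of `Π_{n,2}` and
the sequence `b` counting complete non-ambiguous trees, each defined by its recurrence,
satisfy `B n = b (n - 1)` for all `n ≥ 1`. -/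
theorem statement15 (B b : ℕ -> ℕ)
    (hB1 : B 1 = 1)
    (hB : ∀ n, 2 ≤ n -> B n = ∑ α ∈ Finset.Icc 1 (n - 1),
      (n - 1).choose (α - 1) * (n - 1).choose α * B α * B (n - α))
    (hb0 : b 0 = 1)
    (hb : ∀ n : ℕ, b (n + 1) = ∑ i ∈ Finset.range (n + 1),
      (n + 1).choose i * (n + 1).choose (n - i) * b i * b (n - i)) :
    ∀ n : ℕ, 1 ≤ n -> B n = b (n - 1) := by
  intro n hn
  induction n using Nat.strong_induction_on with
  | _ n ih =>
    match n, hn with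
    | 1, _ => simpa [hb0] using hB1
    | (m+2), _ =>
      have h1 : (m+2) - 1 = m + 1 := rfl
      rw [hB (m+2) (by omega), h1, hb m]
      refine Finset.sum_nbij' (fun α => α - 1) (fun i => i + 1) ?_ ?_ ?_ ?_ ?_
      · intro α hα; simp only [Finset.mem_Icc] at hα; simp only [Finset.mem_range]; omega
      · intro i hi; simp only [Finset.mem_range] at hi; simp only [Finset.mem_Icc]; omega
      · intro α hα; simp only [Finset.mem_Icc] at hα; omega
      · intro i hi; omega
      · intro α hα
        simp only [Finset.mem_Icc] at hα
        obtain ⟨h1', h2'⟩ := hα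
        have e2 : (m+1).choose α = (m+1).choose (m-(α-1)) := by
          rw [← Nat.choose_symm (by omega : α ≤ m + 1)]
          congr 1; omega
        have e3 : B α = b (α-1) := ih α (by omega) (by omega)
        have e4 : B (m+2-α) = b (m-(α-1)) := by
          have := ih (m+2-α) (by omega) (by omega)
          rwa [show m+2-α-1 = m-(α-1) from by omega] at this
        rw [e2, e3, e4]
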